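/- Let W ∈ ℝ^{D×D}, ε > 0, and define the ε-smoothed ℓ2 normalization map h : ℝ^D → ℝ^D by h(x) = Wᵀx / √(‖Wᵀx‖₂² + ε). Then h is Lipschitz continuous with respect to the Euclidean norm with constant at most 2 ε^{−1/2} ‖W‖₂, where ‖W‖₂ is the spectral norm of W. -/

import Mathlib

open Matrix

/-- The spectral norm of a matrix `A`, defined as `sup_{‖x‖₂ = 1} ‖Ax‖₂`. -/
noncomputable def specNorm {M D : ℕ} (A : Matrix (Fin M) (Fin D) ℝ) : ℝ :=
  sSup {c : ℝ | ∃ x : EuclideanSpace ℝ (Fin D), ‖x‖ = 1 ∧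
    c = ‖Matrix.toEuclideanLin A x‖}

lemma specNorm_nonneg {M D : ℕ} (A : Matrix (Fin M) (Fin D) ℝ) : 0 ≤ specNorm A :=
  Real.sSup_nonneg (fun c hc => by obtain ⟨x, -, rfl⟩ := hc; exact norm_nonneg _)

lemma norm_toEuclideanLin_le {M D : ℕ} (A : Matrix (Fin M) (Fin D) ℝ)
    (x : EuclideanSpace ℝ (Fin D)) :
    ‖Matrix.toEuclideanLin A x‖ ≤ specNorm A * ‖x‖ := by
  rcases eq_or_ne x 0 with rfl | hx
  · simp
  · have hxn : (0:ℝ) < ‖x‖ := norm_pos_iff.mpr hx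
    set u : EuclideanSpace ℝ (Fin D) := ‖x‖⁻¹ • x with hu
    have hun : ‖u‖ = 1 := by
      rw [hu, norm_smul, norm_inv, norm_norm, inv_mul_cancel₀ hxn.ne']
    have hmem : ‖Matrix.toEuclideanLin A u‖ ∈ {c : ℝ | ∃ x : EuclideanSpace ℝ (Fin D),
        ‖x‖ = 1 ∧ c = ‖Matrix.toEuclideanLin A x‖} := ⟨u, hun, rfl⟩
    have hbdd : BddAbove {c : ℝ | ∃ x : EuclideanSpace ℝ (Fin D),
        ‖x‖ = 1 ∧ c = ‖Matrix.toEuclideanLin A x‖} := by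
      refine ⟨‖LinearMap.toContinuousLinearMap (Matrix.toEuclideanLin A)‖, ?_⟩
      rintro c ⟨y, hy, rfl⟩
      have := (LinearMap.toContinuousLinearMap (Matrix.toEuclideanLin A)).le_opNorm y
      simpa [hy] using this
    have hle := le_csSup hbdd hmem
    have : ‖Matrix.toEuclideanLin A u‖ = ‖x‖⁻¹ * ‖Matrix.toEuclideanLin A x‖ := by
      rw [hu, _root_.map_smul, norm_smul, norm_inv, norm_norm]
    rw [this] at hle
    calc ‖Matrix.toEuclideanLin A x‖
        = ‖x‖ * (‖x‖⁻¹ * ‖Matrix.toEuclideanLin A x‖) := by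
          field_simp
      _ ≤ ‖x‖ * specNorm A := by
          exact mul_le_mul_of_nonneg_left hle hxn.le
      _ = specNorm A * ‖x‖ := mul_comm _ _

lemma norm_toEuclideanLin_transpose_le {D : ℕ} (W : Matrix (Fin D) (Fin D) ℝ)
    (x : EuclideanSpace ℝ (Fin D)) :
    ‖Matrix.toEuclideanLin Wᵀ x‖ ≤ specNorm W * ‖x‖ := by
  set y := Matrix.toEuclideanLin Wᵀ x with hy
  rcases eq_or_lt_of_le (norm_nonneg y) with h0 | h0
  · rw [← h0]
    exact mul_nonneg (specNorm_nonneg W) (norm_nonneg x)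
  · have hadj : Matrix.toEuclideanLin Wᵀ = LinearMap.adjoint (Matrix.toEuclideanLin W) := by
      rw [← Matrix.conjTranspose_eq_transpose_of_trivial,
        Matrix.toEuclideanLin_conjTranspose_eq_adjoint]
    have hsq : ‖y‖ ^ 2 = @inner ℝ _ _ x (Matrix.toEuclideanLin W y) := by
      rw [← real_inner_self_eq_norm_sq, hy, hadj]
      rw [LinearMap.adjoint_inner_left]
    have hineq : ‖y‖ ^ 2 ≤ ‖x‖ * (specNorm W * ‖y‖) := by
      rw [hsq]
      calc @inner ℝ _ _ x (Matrix.toEuclideanLin W y) ≤ ‖x‖ * ‖Matrix.toEuclideanLin W y‖ :=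
            real_inner_le_norm _ _
        _ ≤ ‖x‖ * (specNorm W * ‖y‖) :=
            mul_le_mul_of_nonneg_left (norm_toEuclideanLin_le W y) (norm_nonneg x)
    have := (mul_le_mul_iff_of_pos_right h0).mp (by nlinarith : ‖y‖ * ‖y‖ ≤ specNorm W * ‖x‖ * ‖y‖)
    exact this

lemma smooth_normalize_lipschitz {D : ℕ} (ε : ℝ) (hε : 0 < ε)
    (a b : EuclideanSpace ℝ (Fin D)) :
    ‖(Real.sqrt (‖a‖ ^ 2 + ε))⁻¹ • a - (Real.sqrt (‖b‖ ^ 2 + ε))⁻¹ • b‖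
      ≤ 2 * (Real.sqrt ε)⁻¹ * ‖a - b‖ := by
  set sa := Real.sqrt (‖a‖ ^ 2 + ε) with hsa
  set sb := Real.sqrt (‖b‖ ^ 2 + ε) with hsb
  have hεs : (0:ℝ) < Real.sqrt ε := Real.sqrt_pos.mpr hε
  have hsa_pos : 0 < sa := Real.sqrt_pos.mpr (by positivity)
  have hsb_pos : 0 < sb := Real.sqrt_pos.mpr (by positivity)
  have hsa_ge : Real.sqrt ε ≤ sa := Real.sqrt_le_sqrt (by nlinarith [sq_nonneg ‖a‖])
  have hsb_ge : Real.sqrt ε ≤ sb := Real.sqrt_le_sqrt (by nlinarith [sq_nonneg ‖b‖])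
  have hna : ‖a‖ ≤ sa := by
    rw [hsa]
    nlinarith [Real.sq_sqrt (by positivity : (0:ℝ) ≤ ‖a‖ ^ 2 + ε),
      Real.sqrt_nonneg (‖a‖ ^ 2 + ε), norm_nonneg a]
  have hnb : ‖b‖ ≤ sb := by
    rw [hsb]
    nlinarith [Real.sq_sqrt (by positivity : (0:ℝ) ≤ ‖b‖ ^ 2 + ε),
      Real.sqrt_nonneg (‖b‖ ^ 2 + ε), norm_nonneg b]
  have hsa2 : sa ^ 2 = ‖a‖ ^ 2 + ε := Real.sq_sqrt (by positivity)
  have hsb2 : sb ^ 2 = ‖b‖ ^ 2 + ε := Real.sq_sqrt (by positivity)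
  have key : sa⁻¹ • a - sb⁻¹ • b = sa⁻¹ • (a - b) + (sa⁻¹ - sb⁻¹) • b := by
    rw [smul_sub, sub_smul]; abel
  rw [key]
  have h1 : ‖sa⁻¹ • (a - b)‖ ≤ (Real.sqrt ε)⁻¹ * ‖a - b‖ := by
    rw [norm_smul, Real.norm_eq_abs, abs_of_pos (inv_pos.mpr hsa_pos)]
    exact mul_le_mul_of_nonneg_right (by
      exact inv_anti₀ hεs hsa_ge) (norm_nonneg _)
  have hdiff : |sb - sa| ≤ ‖a - b‖ := by
    have hsum : |‖b‖ ^ 2 - ‖a‖ ^ 2| ≤ (‖a‖ + ‖b‖) * ‖a - b‖ := by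
      have h1 : |‖b‖ - ‖a‖| ≤ ‖a - b‖ := by
        rw [abs_sub_comm]
        simpa [norm_sub_rev] using abs_norm_sub_norm_le a b
      have h2 : |‖b‖ + ‖a‖| = ‖a‖ + ‖b‖ := by
        rw [abs_of_nonneg (by positivity)]; ring
      calc |‖b‖ ^ 2 - ‖a‖ ^ 2| = |‖b‖ + ‖a‖| * |‖b‖ - ‖a‖| := by
            rw [← abs_mul]; ring_nf
        _ ≤ (‖a‖ + ‖b‖) * ‖a - b‖ := by
            rw [h2]; exact mul_le_mul_of_nonneg_left h1 (by positivity)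
    have hfac : |sb - sa| * (sa + sb) = |‖b‖ ^ 2 - ‖a‖ ^ 2| := by
      have : sb ^ 2 - sa ^ 2 = ‖b‖ ^ 2 - ‖a‖ ^ 2 := by rw [hsa2, hsb2]; ring
      rw [← this]
      rw [show sb ^ 2 - sa ^ 2 = (sb - sa) * (sb + sa) by ring, abs_mul,
        abs_of_pos (by linarith : (0:ℝ) < sb + sa)]
      ring
    have hab_le : ‖a‖ + ‖b‖ ≤ sa + sb := by linarith
    have hpos : (0:ℝ) < sa + sb := by linarith
    have : |sb - sa| * (sa + sb) ≤ ‖a - b‖ * (sa + sb) := by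
      rw [hfac]
      calc |‖b‖ ^ 2 - ‖a‖ ^ 2| ≤ (‖a‖ + ‖b‖) * ‖a - b‖ := hsum
        _ ≤ (sa + sb) * ‖a - b‖ :=
            mul_le_mul_of_nonneg_right hab_le (norm_nonneg _)
        _ = ‖a - b‖ * (sa + sb) := mul_comm _ _
    exact le_of_mul_le_mul_right this hpos
  have h2 : ‖(sa⁻¹ - sb⁻¹) • b‖ ≤ (Real.sqrt ε)⁻¹ * ‖a - b‖ := by
    rw [norm_smul, Real.norm_eq_abs]
    have hinv : |sa⁻¹ - sb⁻¹| = |sb - sa| / (sa * sb) := by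
      rw [inv_sub_inv hsa_pos.ne' hsb_pos.ne', abs_div,
        abs_of_pos (mul_pos hsa_pos hsb_pos)]
    rw [hinv]
    have : |sb - sa| / (sa * sb) * ‖b‖ ≤ |sb - sa| / sa := by
      rw [div_mul_eq_mul_div, div_le_div_iff₀ (by positivity) hsa_pos]
      calc |sb - sa| * ‖b‖ * sa ≤ |sb - sa| * sb * sa :=
            mul_le_mul_of_nonneg_right
              (mul_le_mul_of_nonneg_left hnb (abs_nonneg _)) hsa_pos.le
        _ = |sb - sa| * (sa * sb) := by ring
    calc |sb - sa| / (sa * sb) * ‖b‖ ≤ |sb - sa| / sa := this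
      _ ≤ ‖a - b‖ / Real.sqrt ε := by
          apply div_le_div₀ (norm_nonneg _) hdiff hεs hsa_ge
      _ = (Real.sqrt ε)⁻¹ * ‖a - b‖ := by rw [div_eq_inv_mul]
  calc ‖sa⁻¹ • (a - b) + (sa⁻¹ - sb⁻¹) • b‖
      ≤ ‖sa⁻¹ • (a - b)‖ + ‖(sa⁻¹ - sb⁻¹) • b‖ := norm_add_le _ _
    _ ≤ (Real.sqrt ε)⁻¹ * ‖a - b‖ + (Real.sqrt ε)⁻¹ * ‖a - b‖ := add_le_add h1 h2
    _ = 2 * (Real.sqrt ε)⁻¹ * ‖a - b‖ := by ring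

/-- the ε-smoothed ℓ2 normalization map
`h(x) = Wᵀx / √(‖Wᵀx‖₂² + ε)` is Lipschitz continuous with respect to the Euclidean
norm with constant at most `2 ε^{-1/2} ‖W‖₂`, where `‖W‖₂` is the spectral norm. -/
theorem smoothed_l2_normalization_lipschitz {D : ℕ}
    (W : Matrix (Fin D) (Fin D) ℝ) (ε : ℝ) (hε : 0 < ε) :
    let h : EuclideanSpace ℝ (Fin D) → EuclideanSpace ℝ (Fin D) :=
      fun x => (Real.sqrt (‖Matrix.toEuclideanLin Wᵀ x‖ ^ 2 + ε))⁻¹ •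
        Matrix.toEuclideanLin Wᵀ x
    ∀ x₁ x₂ : EuclideanSpace ℝ (Fin D),
      ‖h x₁ - h x₂‖ ≤ 2 * (Real.sqrt ε)⁻¹ * specNorm W * ‖x₁ - x₂‖ := by
  intro h x₁ x₂
  have step1 : ‖h x₁ - h x₂‖ ≤ 2 * (Real.sqrt ε)⁻¹ *
      ‖Matrix.toEuclideanLin Wᵀ x₁ - Matrix.toEuclideanLin Wᵀ x₂‖ :=
    smooth_normalize_lipschitz ε hε _ _
  have step2 : ‖Matrix.toEuclideanLin Wᵀ x₁ - Matrix.toEuclideanLin Wᵀ x₂‖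
      ≤ specNorm W * ‖x₁ - x₂‖ := by
    rw [← map_sub]
    exact norm_toEuclideanLin_transpose_le W _
  calc ‖h x₁ - h x₂‖ ≤ 2 * (Real.sqrt ε)⁻¹ *
        ‖Matrix.toEuclideanLin Wᵀ x₁ - Matrix.toEuclideanLin Wᵀ x₂‖ := step1
    _ ≤ 2 * (Real.sqrt ε)⁻¹ * (specNorm W * ‖x₁ - x₂‖) :=
        mul_le_mul_of_nonneg_left step2 (by positivity)
    _ = 2 * (Real.sqrt ε)⁻¹ * specNorm W * ‖x₁ - x₂‖ := by ring
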